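/- (ε-dependent weighted Poincaré inequality) Let 0 < ε < L/2 and ρ_ε(x) = 1 - (x/L)(1 - ε/L). For every function R ∈ H¹((0,L); ℝ) with R(0) = 0, the inequality ‖ρ_ε R‖_{L²(0,L)} ≤ (2L/3)·‖ρ_ε² R'‖_{L²(0,L)} holds. -/

import Mathlib

open Set MeasureTheory

set_option maxHeartbeats 1000000

lemma log_tangent {a c : ℝ} (ha : 0 < a) (hc : 0 < c) :
    -Real.log a ≤ -Real.log c + (c / a - 1) := by
  have h := Real.log_le_sub_one_of_pos (show 0 < c / a from div_pos hc ha)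
  rw [Real.log_div hc.ne' ha.ne'] at h
  linarith

lemma case_helper {a l P : ℝ} (ha : 0 < a) (ha2 : a < 1/2) (hl : 0 ≤ l)
    (hal : a*l ≤ P) (hpoly : 81*(2-a)*P^2 < 157.91*((1-a)^2*a)) :
    81*(a*(2-a))*l^2 < 16*Real.pi^2*(1-a)^2 := by
  have hX2 : (a*l)^2 ≤ P^2 := pow_le_pow_left₀ (mul_nonneg ha.le hl) hal 2
  have h3 : 81*(2-a)*(a*l)^2 ≤ 81*(2-a)*P^2 :=
    mul_le_mul_of_nonneg_left hX2 (by linarith)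
  have hpisq : (157.91:ℝ) < 16*Real.pi^2 := by
    nlinarith [sq_nonneg (Real.pi - 3.141592), Real.pi_gt_d6]
  have h4 : (0:ℝ) ≤ (1-a)^2*a := by positivity
  have h5 : 0 ≤ (16*Real.pi^2 - 157.91)*((1-a)^2*a) :=
    mul_nonneg (by linarith) h4
  have key2a : (81*(a*(2-a))*l^2)*a < (16*Real.pi^2*(1-a)^2)*a := by nlinarith [h3, hpoly, h5]
  exact lt_of_mul_lt_mul_right key2a ha.le

lemma omega_log_lt (a : ℝ) (ha : 0 < a) (ha2 : a < 1/2) :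
    Real.sqrt (9*(a*(2-a))/(4*(1-a)^2)) * (-Real.log a) < 2*Real.pi/3 := by
  have h1a : (0:ℝ) < 1 - a := by linarith
  have hl : 0 < -Real.log a := by
    have := Real.log_neg ha (by linarith)
    linarith
  set l := -Real.log a with hldef
  clear_value l
  have hA : (0:ℝ) ≤ 9*(a*(2-a))/(4*(1-a)^2) :=
    div_nonneg (by nlinarith) (by positivity)
  have hpi0 : (0:ℝ) < Real.pi := Real.pi_pos
  have key2 : 81*(a*(2-a))*l^2 < 16*Real.pi^2*(1-a)^2 := by
    have hs2sq : (Real.sqrt 2)^2 = 2 := Real.sq_sqrt (by norm_num)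
    have hs20 : (0:ℝ) < Real.sqrt 2 := Real.sqrt_pos.2 (by norm_num)
    have hs2u : Real.sqrt 2 < 1.4142136 := by
      nlinarith [hs2sq, hs20]
    have hlog2u := Real.log_two_lt_d9
    have tangent : ∀ m : ℕ, a*l ≤ (((2*(m:ℝ)+1)/2)*Real.log 2 - 1)*a + Real.sqrt 2/2^(m+1) := by
      intro m
      have hcpos : (0:ℝ) < Real.sqrt 2 / 2^(m+1) := by positivity
      have hb := log_tangent ha hcpos
      have hlogc : Real.log (Real.sqrt 2 / 2^(m+1)) = Real.log 2 / 2 - ((m:ℝ)+1)*Real.log 2 := by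
        rw [Real.log_div hs20.ne' (by positivity), Real.log_sqrt (by norm_num), Real.log_pow]
        push_cast; ring
      rw [hlogc] at hb
      rw [← hldef] at hb
      have h2 : a * l ≤ a * (-(Real.log 2 / 2 - ((m:ℝ)+1)*Real.log 2) + (Real.sqrt 2/2^(m+1) / a - 1)) :=
        mul_le_mul_of_nonneg_left hb ha.le
      have h3 : a * (Real.sqrt 2/2^(m+1) / a) = Real.sqrt 2/2^(m+1) := by
        field_simp
      linarith [h2, h3]
    rcases le_or_gt (1/4 : ℝ) a with hc | hc
    · have hal : a*l ≤ 0.0398*a + 0.35356 := by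
        have h := tangent 1
        norm_num at h
        have hp : 0 ≤ a*(0.0398 - (3/2*Real.log 2 - 1)) :=
          mul_nonneg ha.le (by linarith)
        linarith [h, hp, hs2u]
      refine case_helper ha ha2 hl.le hal ?_
      nlinarith [mul_nonneg (by linarith : (0:ℝ) ≤ a - 1/4) (by linarith : (0:ℝ) ≤ 1/2 - a), sq_nonneg (a - 0.35)]
    rcases le_or_gt (1/8 : ℝ) a with hc2 | hc2
    · have hal : a*l ≤ 0.7329*a + 0.17678 := by
        have h := tangent 2
        norm_num at h
        have hp : 0 ≤ a*(0.7329 - (5/2*Real.log 2 - 1)) :=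
          mul_nonneg ha.le (by linarith)
        linarith [h, hp, hs2u]
      refine case_helper ha ha2 hl.le hal ?_
      nlinarith [mul_nonneg (by linarith : (0:ℝ) ≤ a - 1/8) (by linarith : (0:ℝ) ≤ 1/4 - a), sq_nonneg (a - 0.18)]
    rcases le_or_gt (1/16 : ℝ) a with hc3 | hc3
    · have hal : a*l ≤ 1.4261*a + 0.08839 := by
        have h := tangent 3
        norm_num at h
        have hp : 0 ≤ a*(1.4261 - (7/2*Real.log 2 - 1)) :=
          mul_nonneg ha.le (by linarith)
        linarith [h, hp, hs2u]
      refine case_helper ha ha2 hl.le hal ?_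
      nlinarith [mul_nonneg (by linarith : (0:ℝ) ≤ a - 1/16) (by linarith : (0:ℝ) ≤ 1/8 - a), sq_nonneg (a - 0.09)]
    rcases le_or_gt (1/32 : ℝ) a with hc4 | hc4
    · have hal : a*l ≤ 2.1192*a + 0.0442 := by
        have h := tangent 4
        norm_num at h
        have hp : 0 ≤ a*(2.1192 - (9/2*Real.log 2 - 1)) :=
          mul_nonneg ha.le (by linarith)
        linarith [h, hp, hs2u]
      refine case_helper ha ha2 hl.le hal ?_
      nlinarith [mul_nonneg (by linarith : (0:ℝ) ≤ a - 1/32) (by linarith : (0:ℝ) ≤ 1/16 - a), sq_nonneg (a - 0.045)]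
    rcases le_or_gt (1/64 : ℝ) a with hc5 | hc5
    · have hal : a*l ≤ 2.8124*a + 0.0221 := by
        have h := tangent 5
        norm_num at h
        have hp : 0 ≤ a*(2.8124 - (11/2*Real.log 2 - 1)) :=
          mul_nonneg ha.le (by linarith)
        linarith [h, hp, hs2u]
      refine case_helper ha ha2 hl.le hal ?_
      nlinarith [mul_nonneg (by linarith : (0:ℝ) ≤ a - 1/64) (by linarith : (0:ℝ) ≤ 1/32 - a), sq_nonneg (a - 0.022)]
    rcases le_or_gt (1/128 : ℝ) a with hc6 | hc6
    · have hal : a*l ≤ 3.5055*a + 0.01105 := by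
        have h := tangent 6
        norm_num at h
        have hp : 0 ≤ a*(3.5055 - (13/2*Real.log 2 - 1)) :=
          mul_nonneg ha.le (by linarith)
        linarith [h, hp, hs2u]
      refine case_helper ha ha2 hl.le hal ?_
      nlinarith [mul_nonneg (by linarith : (0:ℝ) ≤ a - 1/128) (by linarith : (0:ℝ) ≤ 1/64 - a), sq_nonneg (a - 0.011)]
    · set u := a ^ ((1:ℝ)/4) with hudef
      have hu0 : 0 < u := Real.rpow_pos_of_pos ha _
      have hu4a : u^(4:ℕ) = a := by
        rw [hudef, ← Real.rpow_natCast (a ^ ((1:ℝ)/4)) 4, ← Real.rpow_mul ha.le]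
        norm_num
      have hu : u ≤ 0.2974 := by
        refine le_of_pow_le_pow_left₀ (n := 4) (by norm_num) (by norm_num) ?_
        rw [hu4a]; nlinarith [hc6.le]
      have hloga : Real.log a = 4 * Real.log u := by
        rw [← hu4a, Real.log_pow]; push_cast; ring
      have hlogu : -Real.log u ≤ 1/u - 1 := by
        have h := Real.log_le_sub_one_of_pos (show (0:ℝ) < u⁻¹ by positivity)
        rw [Real.log_inv] at h
        have e : (u:ℝ)⁻¹ = 1/u := by ring
        linarith [h]
      have hal : a*l ≤ 4*u^3*(1-u) := by
        have h1 : a * l = u^4 * (4*(-Real.log u)) := by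
          rw [hldef, hloga, ← hu4a]; ring
        have h2 : u^4 * (4*(1/u - 1)) = 4*u^3*(1-u) := by
          field_simp
        rw [h1]
        calc u^4 * (4*(-Real.log u)) ≤ u^4 * (4*(1/u-1)) := by
              apply mul_le_mul_of_nonneg_left (by linarith) (by positivity)
          _ = 4*u^3*(1-u) := h2
      refine case_helper ha ha2 hl.le hal ?_
      rw [← hu4a]
      have hbr : 1296*(2-u^4)*u^2*(1-u)^2 + 42 ≤ 157.91*(1-u^4)^2 := by
        nlinarith [hu0.le, hu, sq_nonneg u, sq_nonneg (u*(1-u)), mul_nonneg hu0.le (by linarith : (0:ℝ) ≤ 0.2974 - u)]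
      have hu4 : (0:ℝ) < u^4 := by positivity
      nlinarith [mul_le_mul_of_nonneg_right hbr hu4.le, hu4]
  have hsq : (Real.sqrt (9*(a*(2-a))/(4*(1-a)^2)) * l)^2 < (2*Real.pi/3)^2 := by
    have h9 : (2*Real.pi/3)^2*(4*(1-a)^2) = 16/9*(Real.pi^2*(1-a)^2) := by ring
    rw [mul_pow, Real.sq_sqrt hA, div_mul_eq_mul_div, div_lt_iff₀ (by positivity), h9]
    linarith [key2]
  exact lt_of_pow_lt_pow_left₀ 2 (by positivity) hsq

theorem stmt7 (L ε : ℝ) (hL : 0 < L) (hε : 0 < ε) (hεL : ε < L / 2)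
    (ρ : ℝ → ℝ) (hρ : ∀ x, ρ x = 1 - (x / L) * (1 - ε / L))
    (R R' : ℝ → ℝ)
    (hcont : ContinuousOn R (Icc 0 L))
    (hderiv : ∀ x ∈ Ioo (0:ℝ) L, HasDerivAt R (R' x) x)
    (h0 : R 0 = 0)
    (hRL2 : IntegrableOn (fun x => (R x) ^ 2) (Ioo 0 L))
    (hdL2 : IntegrableOn (fun x => (R' x) ^ 2) (Ioo 0 L)) :
    Real.sqrt (∫ x in Ioo (0:ℝ) L, (ρ x * R x) ^ 2) ≤
      (2 * L / 3) * Real.sqrt (∫ x in Ioo (0:ℝ) L, ((ρ x) ^ 2 * R' x) ^ 2) := by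
  have hL0 : L ≠ 0 := hL.ne'
  set a : ℝ := ε / L with ha_def
  clear_value a
  have ha : 0 < a := by rw [ha_def]; exact div_pos hε hL
  have ha2 : a < 1/2 := by
    rw [ha_def, div_lt_iff₀ hL]; linarith
  have h1a : (0:ℝ) < 1 - a := by linarith
  set k : ℝ := (1 - a)/L with hk_def
  clear_value k
  have hk : 0 < k := by rw [hk_def]; exact div_pos h1a hL
  have hkL : k * L = 1 - a := by rw [hk_def]; field_simp
  have hρval : ∀ x, ρ x = 1 - k * x := by
    intro x; rw [hρ, hk_def]; field_simp
  have hρcont : Continuous ρ := by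
    have : ρ = fun x => 1 - k * x := funext hρval
    rw [this]; continuity
  have hρd : ∀ x : ℝ, HasDerivAt ρ (-k) x := by
    intro x
    have h : HasDerivAt (fun y : ℝ => 1 - k*y) (-k) x := by
      simpa using ((hasDerivAt_id x).const_mul k).const_sub 1
    exact h.congr_of_eventuallyEq (Filter.Eventually.of_forall fun y => (hρval y))
  have hρ_lb : ∀ x ∈ Icc (0:ℝ) L, a ≤ ρ x := by
    intro x hx
    rw [hρval]
    have h1 : k * x ≤ k * L := mul_le_mul_of_nonneg_left hx.2 hk.le
    rw [hkL] at h1; linarith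
  have hρ_ub : ∀ x ∈ Icc (0:ℝ) L, ρ x ≤ 1 := by
    intro x hx
    rw [hρval]
    nlinarith [mul_nonneg hk.le hx.1]
  have hρpos : ∀ x ∈ Icc (0:ℝ) L, 0 < ρ x := fun x hx => lt_of_lt_of_le ha (hρ_lb x hx)
  have hρL : ρ L = a := by rw [hρval]; linarith [hkL]
  set ω : ℝ := Real.sqrt (9*(a*(2-a))/(4*(1-a)^2)) with hω_def
  have hω0 : 0 ≤ ω := Real.sqrt_nonneg _
  have hω2 : ω^2 = 9*(a*(2-a))/(4*(1-a)^2) :=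
    Real.sq_sqrt (div_nonneg (by nlinarith) (by positivity))
  have hs3sq : (Real.sqrt 3)^2 = 3 := Real.sq_sqrt (by norm_num)
  have hs30 : (0:ℝ) < Real.sqrt 3 := Real.sqrt_pos.2 (by norm_num)
  have hωle : ω ≤ 3*Real.sqrt 3/2 := by
    refine le_of_pow_le_pow_left₀ (n := 2) (by norm_num) (by positivity) ?_
    rw [hω2]
    have h1 : (3*Real.sqrt 3/2)^2 = 27/4 := by
      rw [div_pow, mul_pow, hs3sq]; norm_num
    rw [h1, div_le_iff₀ (by positivity)]
    nlinarith [mul_nonneg (by linarith : (0:ℝ) ≤ 1 - 2*a) (by linarith : (0:ℝ) ≤ 3 - 2*a)]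
  have hT2 : ω * (-Real.log a) < 2*Real.pi/3 := omega_log_lt a ha ha2
  clear_value ω
  set lam : ℝ := 9/(4*L^2) with hlam_def
  clear_value lam
  have hlam : 0 < lam := by rw [hlam_def]; positivity
  have hkω : k^2*ω^2 = lam - 9/4*k^2 := by
    rw [hω2, hk_def, hlam_def]; field_simp; ring
  have hloga_neg : Real.log a < 0 := Real.log_neg ha (by linarith)
  have hπ : (0:ℝ) < Real.pi := Real.pi_pos
  set θ : ℝ := max (ω*(-Real.log a) - Real.pi/6) 0 with hθ_def
  have hθ0 : 0 ≤ θ := le_max_right _ _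
  have hθlt : θ < Real.pi/2 := max_lt (by linarith) (by linarith)
  have hωl0 : 0 ≤ ω*(-Real.log a) := mul_nonneg hω0 (by linarith)
  have hβlb : -(Real.pi/6) ≤ θ - ω*(-Real.log a) := by
    have := le_max_left (ω*(-Real.log a) - Real.pi/6) 0
    linarith
  have hβub : θ - ω*(-Real.log a) ≤ 0 := by
    have : θ ≤ ω*(-Real.log a) := max_le (by linarith) hωl0
    linarith
  clear_value θ
  set η : ℝ → ℝ := fun x => ω * Real.log (ρ x) + θ with hη_def
  clear_value η
  have hη_mem : ∀ x ∈ Icc (0:ℝ) L, η x ∈ Ioo (-(Real.pi/2)) (Real.pi/2) := by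
    intro x hx
    have hpos := hρpos x hx
    have hlog_ub : Real.log (ρ x) ≤ 0 := Real.log_nonpos hpos.le (hρ_ub x hx)
    have hlog_lb : Real.log a ≤ Real.log (ρ x) := Real.log_le_log ha (hρ_lb x hx)
    have h1 : ω * Real.log (ρ x) ≤ 0 := mul_nonpos_of_nonneg_of_nonpos hω0 hlog_ub
    have h2 : ω * Real.log a ≤ ω * Real.log (ρ x) := mul_le_mul_of_nonneg_left hlog_lb hω0
    rw [hη_def]
    constructor
    · simp only; linarith
    · simp only; linarith
  have hcosη : ∀ x ∈ Icc (0:ℝ) L, 0 < Real.cos (η x) :=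
    fun x hx => Real.cos_pos_of_mem_Ioo (hη_mem x hx)
  have hηL : η L = θ - ω*(-Real.log a) := by
    rw [hη_def]; simp only [hρL]; ring
  set Φ : ℝ → ℝ := fun x => 3/2 + ω * (Real.sin (η x) / Real.cos (η x)) with hΦ_def
  clear_value Φ
  have hΦd : ∀ x ∈ Icc (0:ℝ) L, HasDerivAt Φ (ω * (ω * (-k / ρ x) / (Real.cos (η x))^2)) x := by
    intro x hx
    have hpos := hρpos x hx
    have hcos := (hcosη x hx).ne'
    have hηd : HasDerivAt η (ω * (-k / ρ x)) x := by
      rw [hη_def]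
      have hlogd : HasDerivAt (fun y => Real.log (ρ y)) (-k / ρ x) x :=
        (hρd x).log hpos.ne'
      simpa using (hlogd.const_mul ω).add_const θ
    have hsind : HasDerivAt (fun y => Real.sin (η y)) (Real.cos (η x) * (ω * (-k / ρ x))) x := hηd.sin
    have hcosd : HasDerivAt (fun y => Real.cos (η y)) (-Real.sin (η x) * (ω * (-k / ρ x))) x := hηd.cos
    have hdiv := hsind.div hcosd hcos
    have hsc := Real.sin_sq_add_cos_sq (η x)
    have hval : (Real.cos (η x) * (ω * (-k / ρ x)) * Real.cos (η x) -
        Real.sin (η x) * (-Real.sin (η x) * (ω * (-k / ρ x)))) / (Real.cos (η x))^2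
        = ω * (-k / ρ x) / (Real.cos (η x))^2 := by
      have e : Real.cos (η x) * (ω * (-k / ρ x)) * Real.cos (η x) -
          Real.sin (η x) * (-Real.sin (η x) * (ω * (-k / ρ x)))
          = (ω * (-k / ρ x)) * ((Real.sin (η x))^2 + (Real.cos (η x))^2) := by ring
      rw [e, hsc, mul_one]
    rw [hval] at hdiv
    rw [hΦ_def]
    simpa using (hdiv.const_mul ω).const_add (3/2)
  have hΦcont : ContinuousOn Φ (Icc 0 L) :=
    fun x hx => ((hΦd x hx).continuousAt).continuousWithinAt
  set u : ℝ → ℝ := fun x => -(k * ((ρ x)^3 * Φ x)) with hu_def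
  clear_value u
  have hud : ∀ x ∈ Icc (0:ℝ) L, HasDerivAt u (lam*(ρ x)^2 + k^2*(ρ x)^2*(Φ x)^2) x := by
    intro x hx
    have hpos := hρpos x hx
    have hcos := hcosη x hx
    have hρ3 : HasDerivAt (fun y => (ρ y)^3) ((3:ℕ) * (ρ x)^2 * (-k)) x := (hρd x).pow 3
    have hprod := ((hρ3.mul (hΦd x hx)).const_mul k).neg
    have h1 : HasDerivAt u (-(k * ((3:ℕ) * (ρ x)^2 * (-k) * Φ x +
        (ρ x)^3 * (ω * (ω * (-k / ρ x) / (Real.cos (η x))^2))))) x := by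
      rw [hu_def]
      exact hprod
    convert h1 using 1
    have hsc := Real.sin_sq_add_cos_sq (η x)
    have hc2 : 1 + (Real.sin (η x)/Real.cos (η x))^2 = 1/(Real.cos (η x))^2 := by
      rw [div_pow]
      field_simp
      linarith [hsc]
    have hΦx : Φ x = 3/2 + ω * (Real.sin (η x) / Real.cos (η x)) := by rw [hΦ_def]
    have hD : -(k * ((3:ℕ) * (ρ x)^2 * (-k) * Φ x +
        (ρ x)^3 * (ω * (ω * (-k / ρ x) / (Real.cos (η x))^2))))
        = 3*k^2*(ρ x)^2*(Φ x) + k^2*ω^2*(ρ x)^2*(1/(Real.cos (η x))^2) := by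
      field_simp
      ring
    rw [hD, ← hc2, hΦx]
    linear_combination (-(ρ x)^2) * hkω
  have hucont : ContinuousOn u (Icc 0 L) :=
    fun x hx => ((hud x hx).continuousAt).continuousWithinAt
  set W : ℝ → ℝ := fun x => u x * (R x)^2 with hW_def
  clear_value W
  set g : ℝ → ℝ := fun x =>
    (lam*(ρ x)^2 + k^2*(ρ x)^2*(Φ x)^2) * (R x)^2 + u x * (2 * (R x * R' x)) with hg_def
  clear_value g
  have hWd : ∀ x ∈ Ioo (0:ℝ) L, HasDerivAt W (g x) x := by
    intro x hx
    have hx' : x ∈ Icc (0:ℝ) L := Ioo_subset_Icc_self hx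
    have hR2 : HasDerivAt (fun y => (R y)^2) ((2:ℕ) * (R x)^1 * R' x) x := (hderiv x hx).pow 2
    have h2 : HasDerivAt (fun y => u y * (R y)^2) ((lam*(ρ x)^2 + k^2*(ρ x)^2*(Φ x)^2) * (R x)^2 + u x * ((2:ℕ) * (R x)^1 * R' x)) x := (hud x hx').mul hR2
    rw [hW_def, hg_def]
    convert h2 using 1
    push_cast
    ring
  have hWcont : ContinuousOn W (Icc 0 L) := by
    rw [hW_def]; exact hucont.mul (hcont.pow 2)
  have hmeasR : AEStronglyMeasurable R (volume.restrict (Ioo 0 L)) :=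
    (hcont.mono Ioo_subset_Icc_self).aestronglyMeasurable measurableSet_Ioo
  have hmeasR' : AEStronglyMeasurable R' (volume.restrict (Ioo 0 L)) := by
    have h2 : (deriv R) =ᵐ[volume.restrict (Ioo 0 L)] R' := by
      rw [Filter.EventuallyEq, ae_restrict_iff' measurableSet_Ioo]
      exact Filter.Eventually.of_forall fun x hx => (hderiv x hx).deriv
    exact ((measurable_deriv R).aestronglyMeasurable).congr h2
  have hc1cont : ContinuousOn (fun x => lam*(ρ x)^2 + k^2*(ρ x)^2*(Φ x)^2) (Icc (0:ℝ) L) := by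
    apply ContinuousOn.add
    · exact continuousOn_const.mul (hρcont.continuousOn.pow 2)
    · exact (continuousOn_const.mul (hρcont.continuousOn.pow 2)).mul (hΦcont.pow 2)
  have hc1meas : AEStronglyMeasurable (fun x => lam*(ρ x)^2 + k^2*(ρ x)^2*(Φ x)^2)
      (volume.restrict (Ioo 0 L)) :=
    (hc1cont.mono Ioo_subset_Icc_self).aestronglyMeasurable measurableSet_Ioo
  have humeas : AEStronglyMeasurable u (volume.restrict (Ioo 0 L)) :=
    (hucont.mono Ioo_subset_Icc_self).aestronglyMeasurable measurableSet_Ioo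
  have hgmeas : AEStronglyMeasurable g (volume.restrict (Ioo 0 L)) := by
    rw [hg_def]
    exact (hc1meas.mul hRL2.aestronglyMeasurable).add
      (humeas.mul ((hmeasR.mul hmeasR').const_mul 2))
  obtain ⟨C1, hC1⟩ := isCompact_Icc.exists_bound_of_continuousOn hc1cont
  obtain ⟨C2, hC2⟩ := isCompact_Icc.exists_bound_of_continuousOn hucont
  have hbint : Integrable (fun x => C1*(R x)^2 + C2*((R x)^2 + (R' x)^2))
      (volume.restrict (Ioo 0 L)) :=
    (hRL2.const_mul C1).add ((hRL2.add hdL2).const_mul C2)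
  have hgIoo : IntegrableOn g (Ioo 0 L) := by
    refine Integrable.mono' hbint hgmeas ?_
    rw [ae_restrict_iff' measurableSet_Ioo]
    refine Filter.Eventually.of_forall fun x hx => ?_
    have hx' : x ∈ Icc (0:ℝ) L := Ioo_subset_Icc_self hx
    have h1 := hC1 x hx'
    have h2 := hC2 x hx'
    rw [Real.norm_eq_abs] at h1 h2
    have hC20 : 0 ≤ C2 := le_trans (abs_nonneg _) h2
    have e1 : |(lam*(ρ x)^2 + k^2*(ρ x)^2*(Φ x)^2) * (R x)^2| ≤ C1 * (R x)^2 := by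
      rw [abs_mul, abs_of_nonneg (sq_nonneg (R x))]
      exact mul_le_mul_of_nonneg_right h1 (sq_nonneg _)
    have e2 : |u x * (2 * (R x * R' x))| ≤ C2 * ((R x)^2 + (R' x)^2) := by
      rw [abs_mul]
      have h3 : |2 * (R x * R' x)| ≤ (R x)^2 + (R' x)^2 := by
        rw [abs_le]
        constructor
        · nlinarith [sq_nonneg (R x + R' x)]
        · nlinarith [sq_nonneg (R x - R' x)]
      exact mul_le_mul h2 h3 (abs_nonneg _) hC20
    rw [Real.norm_eq_abs, hg_def]
    calc |(lam*(ρ x)^2 + k^2*(ρ x)^2*(Φ x)^2) * (R x)^2 + u x * (2 * (R x * R' x))|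
        ≤ |(lam*(ρ x)^2 + k^2*(ρ x)^2*(Φ x)^2) * (R x)^2| + |u x * (2 * (R x * R' x))| :=
          abs_add_le _ _
      _ ≤ C1*(R x)^2 + C2*((R x)^2 + (R' x)^2) := add_le_add e1 e2
  have hgInt : IntervalIntegrable g volume 0 L := by
    rw [intervalIntegrable_iff_integrableOn_Ioc_of_le hL.le]
    exact hgIoo.congr_set_ae Ioo_ae_eq_Ioc.symm
  have hFTC : ∫ y in (0:ℝ)..L, g y = W L - W 0 :=
    intervalIntegral.integral_eq_sub_of_hasDeriv_right_of_le hL.le hWcont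
      (fun x hx => (hWd x hx).hasDerivWithinAt) hgInt
  have hW0 : W 0 = 0 := by rw [hW_def]; simp [h0]
  have hWL : W L ≤ 0 := by
    have hΦL : 0 ≤ Φ L := by
      rw [hΦ_def]
      simp only [hηL]
      set β := θ - ω*(-Real.log a) with hβ_def
      have hcosβ : Real.sqrt 3 / 2 ≤ Real.cos β := by
        rw [← Real.cos_pi_div_six, ← Real.cos_neg β]
        apply Real.cos_le_cos_of_nonneg_of_le_pi (by linarith) (by linarith)
        linarith
      have hcosβ0 : 0 < Real.cos β := by linarith
      have hsinβ : -(1/2) ≤ Real.sin β := by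
        rw [show -(1/2 : ℝ) = Real.sin (-(Real.pi/6)) by
          rw [Real.sin_neg, Real.sin_pi_div_six]]
        apply Real.strictMonoOn_sin.monotoneOn ⟨by linarith, by linarith⟩
          ⟨by linarith, by linarith⟩ hβlb
      have h1 : ω * (-(1/2)) ≤ ω * Real.sin β := mul_le_mul_of_nonneg_left hsinβ hω0
      have key : 0 ≤ 3/2 * Real.cos β + ω * Real.sin β := by linarith
      have e : 3/2 + ω * (Real.sin β / Real.cos β)
          = (3/2 * Real.cos β + ω * Real.sin β)/Real.cos β := by
        field_simp
      rw [e]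
      positivity
    have hu_L : u L = -(k * (a^3 * Φ L)) := by rw [hu_def]; simp only [hρL]
    have h1 : 0 ≤ k * (a^3 * Φ L) := by positivity
    rw [hW_def]
    simp only [hu_L]
    have := mul_nonneg h1 (sq_nonneg (R L))
    linarith
  have hρm : AEStronglyMeasurable ρ (volume.restrict (Ioo 0 L)) :=
    hρcont.aestronglyMeasurable
  have hint1 : IntegrableOn (fun x => (ρ x * R x)^2) (Ioo 0 L) := by
    refine Integrable.mono' hRL2 ((hρm.mul hmeasR).pow 2) ?_
    rw [ae_restrict_iff' measurableSet_Ioo]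
    refine Filter.Eventually.of_forall fun x hx => ?_
    have hx' : x ∈ Icc (0:ℝ) L := Ioo_subset_Icc_self hx
    rw [Real.norm_eq_abs, abs_of_nonneg (sq_nonneg _)]
    have h1 : (ρ x)^2 ≤ 1 := by nlinarith [hρ_ub x hx', hρpos x hx']
    nlinarith [sq_nonneg (R x), mul_le_mul_of_nonneg_right h1 (sq_nonneg (R x))]
  have hint2 : IntegrableOn (fun x => ((ρ x)^2 * R' x)^2) (Ioo 0 L) := by
    refine Integrable.mono' hdL2 (((hρm.pow 2).mul hmeasR').pow 2) ?_
    rw [ae_restrict_iff' measurableSet_Ioo]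
    refine Filter.Eventually.of_forall fun x hx => ?_
    have hx' : x ∈ Icc (0:ℝ) L := Ioo_subset_Icc_self hx
    rw [Real.norm_eq_abs, abs_of_nonneg (sq_nonneg _)]
    have h1 : (ρ x)^2 ≤ 1 := by nlinarith [hρ_ub x hx', hρpos x hx']
    have h2 : (ρ x)^4 ≤ 1 := by nlinarith [sq_nonneg (ρ x), h1]
    nlinarith [sq_nonneg (R' x), mul_le_mul_of_nonneg_right h2 (sq_nonneg (R' x))]
  have hpt : ∀ x ∈ Ioo (0:ℝ) L, lam*(ρ x * R x)^2 - ((ρ x)^2 * R' x)^2 ≤ g x := by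
    intro x hx
    simp only [hg_def, hu_def]
    have e : (lam*(ρ x)^2 + k^2*(ρ x)^2*(Φ x)^2)*(R x)^2
        + (-(k*((ρ x)^3*Φ x)))*(2*(R x*R' x))
        - (lam*(ρ x * R x)^2 - ((ρ x)^2*R' x)^2)
        = (k*ρ x*Φ x*R x - (ρ x)^2*R' x)^2 := by ring
    linarith [sq_nonneg (k*ρ x*Φ x*R x - (ρ x)^2*R' x), e]
  have hI1nonneg : 0 ≤ ∫ x in Ioo (0:ℝ) L, (ρ x * R x)^2 :=
    setIntegral_nonneg measurableSet_Ioo (fun x _ => sq_nonneg _)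
  have hmain : lam * (∫ x in Ioo (0:ℝ) L, (ρ x * R x)^2)
      - (∫ x in Ioo (0:ℝ) L, ((ρ x)^2 * R' x)^2) ≤ 0 := by
    have hsub : ∫ x in Ioo (0:ℝ) L, (lam*(ρ x * R x)^2 - ((ρ x)^2 * R' x)^2)
        = lam * (∫ x in Ioo (0:ℝ) L, (ρ x * R x)^2)
          - (∫ x in Ioo (0:ℝ) L, ((ρ x)^2 * R' x)^2) := by
      rw [integral_sub (hint1.const_mul lam) hint2, integral_const_mul]
    have hmono : ∫ x in Ioo (0:ℝ) L, (lam*(ρ x * R x)^2 - ((ρ x)^2 * R' x)^2)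
        ≤ ∫ x in Ioo (0:ℝ) L, g x :=
      setIntegral_mono_on ((hint1.const_mul lam).sub hint2) hgIoo measurableSet_Ioo hpt
    have heq1 : ∫ x in Ioo (0:ℝ) L, g x = ∫ x in Ioc (0:ℝ) L, g x :=
      setIntegral_congr_set Ioo_ae_eq_Ioc
    have heq2 : ∫ x in Ioc (0:ℝ) L, g x = ∫ y in (0:ℝ)..L, g y :=
      (intervalIntegral.integral_of_le hL.le).symm
    rw [hsub] at hmono
    rw [heq1, heq2, hFTC, hW0] at hmono
    linarith
  have hI1le : (∫ x in Ioo (0:ℝ) L, (ρ x * R x)^2)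
      ≤ (2*L/3)^2 * ∫ x in Ioo (0:ℝ) L, ((ρ x)^2 * R' x)^2 := by
    have h1 : lam * ∫ x in Ioo (0:ℝ) L, (ρ x * R x)^2
        ≤ ∫ x in Ioo (0:ℝ) L, ((ρ x)^2 * R' x)^2 := by linarith
    have h3 := mul_le_mul_of_nonneg_left h1 (le_of_lt (show (0:ℝ) < 1/lam by positivity))
    have h2 : (1/lam) * (lam * ∫ x in Ioo (0:ℝ) L, (ρ x * R x)^2)
        = ∫ x in Ioo (0:ℝ) L, (ρ x * R x)^2 := by
      field_simp
    have h4 : (1/lam) * ∫ x in Ioo (0:ℝ) L, ((ρ x)^2 * R' x)^2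
        = (2*L/3)^2 * ∫ x in Ioo (0:ℝ) L, ((ρ x)^2 * R' x)^2 := by
      rw [hlam_def]
      have : 1/((9:ℝ)/(4*L^2)) = (2*L/3)^2 := by field_simp; ring
      rw [this]
    rw [h2, h4] at h3
    exact h3
  calc Real.sqrt (∫ x in Ioo (0:ℝ) L, (ρ x * R x)^2)
      ≤ Real.sqrt ((2*L/3)^2 * ∫ x in Ioo (0:ℝ) L, ((ρ x)^2 * R' x)^2) :=
        Real.sqrt_le_sqrt hI1le
    _ = (2*L/3) * Real.sqrt (∫ x in Ioo (0:ℝ) L, ((ρ x)^2 * R' x)^2) := by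
        rw [Real.sqrt_mul (sq_nonneg _), Real.sqrt_sq (by positivity)]
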